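/- Let Y be a symmetric random variable whose moments grow α-regularly (α ≥ 1). Let p, q be positive even integers with p ≥ 2q, and suppose E|1+Y|^q ≤ e^A ≤ e^q for some A > 0. Then E|1 + (q/(4eαp))Y|^p ≤ e^{pA/q}. -/

import Mathlib

open MeasureTheory

/-- `‖Y‖_p = (E|Y|^p)^{1/p}`. -/
noncomputable def mnorm {Ω : Type*} [MeasurableSpace Ω] (μ : Measure Ω) (Y : Ω → ℝ)
    (p : ℝ) : ℝ :=
  (∫ ω, |Y ω| ^ p ∂μ) ^ (1 / p)

open Finset ENNReal

-- F2: q^k * k! ≤ descFactorial q k * k^k  for k ≤ q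
lemma aux_pow_factorial_le (q k : ℕ) (hk : k ≤ q) :
    q ^ k * k.factorial ≤ q.descFactorial k * k ^ k := by
  have h1 : q.descFactorial k = ∏ i ∈ range k, (q - i) := Nat.descFactorial_eq_prod_range q k
  have h2 : k.factorial = ∏ i ∈ range k, (k - i) := by
    rw [← Nat.descFactorial_self]; exact Nat.descFactorial_eq_prod_range k k
  calc q ^ k * k.factorial = ∏ i ∈ range k, (q * (k - i)) := by
        rw [h2, Finset.prod_mul_distrib, Finset.prod_const, Finset.card_range]
    _ ≤ ∏ i ∈ range k, ((q - i) * k) := by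
        apply Finset.prod_le_prod'
        intro i hi
        have hik : i < k := Finset.mem_range.mp hi
        have hiq : i ≤ q := le_trans (le_of_lt hik) hk
        have e1 : q * (k - i) = q * k - q * i := Nat.mul_sub q k i
        have e2 : (q - i) * k = q * k - i * k := Nat.sub_mul q i k
        rw [e1, e2]
        apply Nat.sub_le_sub_left
        calc i * k ≤ i * q := Nat.mul_le_mul_left i hk
          _ = q * i := Nat.mul_comm i q
    _ = q.descFactorial k * k ^ k := by
        rw [h1, Finset.prod_mul_distrib, Finset.prod_const, Finset.card_range]

-- F1: k^k ≤ e^k * k!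
lemma aux_pow_le_exp_factorial (k : ℕ) :
    (k : ℝ) ^ k ≤ Real.exp 1 ^ k * k.factorial := by
  have h : ((k:ℝ)) ^ k / k.factorial ≤ Real.exp k := by
    have h0 := Real.sum_le_exp_of_nonneg (x := (k:ℝ)) (Nat.cast_nonneg k) (k + 1)
    refine le_trans ?_ h0
    have e : ((k:ℝ)) ^ k / k.factorial = ∑ i ∈ {k}, (k:ℝ) ^ i / i.factorial := by simp
    rw [e]
    apply Finset.sum_le_sum_of_subset_of_nonneg
    · intro x hx; simp at hx; simp [hx, Nat.lt_succ_self]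
    · intro i _ _; positivity
  have hexp : Real.exp (k : ℝ) = Real.exp 1 ^ k := by
    rw [← Real.exp_nat_mul, mul_one]
  have hfac : (0:ℝ) < k.factorial := by exact_mod_cast k.factorial_pos
  rw [div_le_iff₀ hfac] at h
  rw [← hexp]
  exact h


set_option maxHeartbeats 2000000 in
/-- For a symmetric `Y` with α-regularly growing moments, even integers `p ≥ 2q > 0` and
`A > 0` with `E|1+Y|^q ≤ e^A ≤ e^q`, one has `E|1 + (q/(4eαp)) Y|^p ≤ e^{pA/q}`. -/
theorem stmt7 {Ω : Type*} [MeasurableSpace Ω] (μ : Measure Ω) [IsProbabilityMeasure μ]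
    (Y : Ω → ℝ) (hmeas : Measurable Y) (α : ℝ) (hα : 1 ≤ α)
    (hsymm : Measure.map Y μ = Measure.map (fun ω => -Y ω) μ)
    (hmem : ∀ r : ℝ, 2 ≤ r → MemLp Y (ENNReal.ofReal r) μ)
    (hreg : ∀ r s : ℝ, 2 ≤ s → s ≤ r → mnorm μ Y r ≤ α * (r / s) * mnorm μ Y s)
    (p q : ℕ) (hqpos : 0 < q) (hqeven : Even q) (hpeven : Even p) (hpq : 2 * q ≤ p)
    (A : ℝ) (hA : 0 < A)
    (h1 : ∫ ω, |1 + Y ω| ^ q ∂μ ≤ Real.exp A) (h2 : Real.exp A ≤ Real.exp q) :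
    ∫ ω, |1 + (q : ℝ) / (4 * Real.exp 1 * α * p) * Y ω| ^ p ∂μ
      ≤ Real.exp ((p : ℝ) * A / q) := by
  have hα0 : (0:ℝ) < α := lt_of_lt_of_le one_pos hα
  have he1 : (0:ℝ) < Real.exp 1 := Real.exp_pos 1
  have hppos : 0 < p := lt_of_lt_of_le (by omega : 0 < 2 * q) hpq
  -- integrability of all powers
  have hint : ∀ n : ℕ, Integrable (fun ω => Y ω ^ n) μ := by
    intro n
    rcases Nat.eq_zero_or_pos n with hn | hn
    · subst hn; simpa using integrable_const (1:ℝ)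
    have hm : MemLp Y (ENNReal.ofReal (max 2 (n:ℝ))) μ := hmem _ (le_max_left _ _)
    have hm' : MemLp Y ((n : ℝ≥0∞)) μ := by
      refine hm.mono_exponent ?_
      rw [← ENNReal.ofReal_natCast]
      exact ENNReal.ofReal_le_ofReal (le_max_right _ _)
    have hi : Integrable (fun ω => ‖Y ω‖ ^ ((n : ℝ≥0∞).toReal)) μ := by
      refine hm'.integrable_norm_rpow ?_ ?_
      · exact_mod_cast Nat.cast_ne_zero.mpr hn.ne'
      · simp
    have hi2 : Integrable (fun ω => |Y ω| ^ n) μ := by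
      refine hi.congr (Filter.Eventually.of_forall fun ω => ?_)
      simp [Real.rpow_natCast, Real.norm_eq_abs]
    refine hi2.mono ((hmeas.pow_const n).aestronglyMeasurable)
      (Filter.Eventually.of_forall fun ω => ?_)
    simp [abs_pow]
  -- moments
  set M : ℕ → ℝ := fun k => ∫ ω, Y ω ^ k ∂μ with hM
  have hodd : ∀ n : ℕ, Odd n → M n = 0 := by
    intro n hn
    have hgm : Measurable fun x : ℝ => x ^ n := measurable_id.pow_const n
    have e1 : M n = ∫ x, x ^ n ∂(μ.map Y) := by
      rw [integral_map hmeas.aemeasurable hgm.aestronglyMeasurable]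
    have e3 : ∫ x, x ^ n ∂(μ.map Y) = ∫ ω, (-Y ω) ^ n ∂μ := by
      rw [hsymm, integral_map (φ := fun ω => -Y ω) (hmeas.neg).aemeasurable hgm.aestronglyMeasurable]
    have e4 : ∫ ω, (-Y ω) ^ n ∂μ = - M n := by
      rw [hM]; rw [← integral_neg]
      exact integral_congr_ae (Filter.Eventually.of_forall fun ω => hn.neg_pow (Y ω))
    have : M n = - M n := e1.trans (e3.trans e4)
    linarith
  have hMabs : ∀ n : ℕ, Even n → M n = ∫ ω, |Y ω| ^ n ∂μ := by
    intro n hn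
    exact integral_congr_ae (Filter.Eventually.of_forall fun ω => ((hn.pow_abs (Y ω)).symm))
  have hMnonneg : ∀ n : ℕ, 0 ≤ M n := by
    intro n
    rcases Nat.even_or_odd n with hn | hn
    · rw [hMabs n hn]; exact integral_nonneg fun ω => by positivity
    · rw [hodd n hn]
  have hM0 : M 0 = 1 := by simp [hM]
  -- binomial expansion
  have hexpand : ∀ (c : ℝ) (n : ℕ), ∫ ω, (1 + c * Y ω) ^ n ∂μ
      = ∑ k ∈ range (n + 1), (n.choose k : ℝ) * c ^ k * M k := by
    intro c n
    have e1 : ∀ ω, (1 + c * Y ω) ^ n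
        = ∑ k ∈ range (n + 1), (n.choose k : ℝ) * c ^ k * Y ω ^ k := by
      intro ω
      rw [add_comm, add_pow]
      refine Finset.sum_congr rfl fun k _ => ?_
      rw [mul_pow]; ring
    rw [integral_congr_ae (Filter.Eventually.of_forall fun ω => e1 ω)]
    rw [integral_finset_sum]
    · refine Finset.sum_congr rfl fun k _ => ?_
      rw [integral_const_mul]
    · intro k _
      exact ((hint k).const_mul _)
  -- expansion of the hypothesis
  have hq1 : ∑ k ∈ range (q + 1), (q.choose k : ℝ) * M k ≤ Real.exp A := by
    have e : ∫ ω, |1 + Y ω| ^ q ∂μ = ∫ ω, (1 + 1 * Y ω) ^ q ∂μ := by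
      refine integral_congr_ae (Filter.Eventually.of_forall fun ω => ?_)
      simp only [one_mul, hqeven.pow_abs]
    rw [e, hexpand 1 q] at h1
    simpa using h1
  have hsplit : ∀ (f : ℕ → ℝ) (n : ℕ),
      ∑ k ∈ range (n+1), f k = f 0 + ∑ k ∈ Ico 1 (n+1), f k := by
    intro f n
    rw [Finset.range_eq_Ico, Finset.sum_eq_sum_Ico_succ_bot (by omega)]
  have hqIco : ∑ k ∈ Ico 1 (q+1), (q.choose k : ℝ) * M k ≤ Real.exp A - 1 := by
    rw [hsplit (fun k => (q.choose k : ℝ) * M k) q] at hq1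
    simp only [Nat.choose_zero_right, Nat.cast_one, one_mul, hM0] at hq1
    linarith
  have hMq : M q ≤ Real.exp A - 1 := by
    have hsub : ∑ k ∈ ({q} : Finset ℕ), (q.choose k : ℝ) * M k
        ≤ ∑ k ∈ Ico 1 (q+1), (q.choose k : ℝ) * M k := by
      apply Finset.sum_le_sum_of_subset_of_nonneg
      · intro x hx
        simp only [Finset.mem_singleton] at hx
        subst hx
        simp only [Finset.mem_Ico]
        omega
      · intro i _ _
        exact mul_nonneg (Nat.cast_nonneg _) (hMnonneg i)
    simp only [Finset.sum_singleton, Nat.choose_self, Nat.cast_one, one_mul] at hsub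
    linarith
  -- mnorm facts
  have hmnorm_nonneg : ∀ n : ℕ, 0 ≤ mnorm μ Y n := fun n =>
    Real.rpow_nonneg (integral_nonneg fun ω => Real.rpow_nonneg (abs_nonneg _) _) _
  have hmnorm_pow : ∀ n : ℕ, 0 < n → (mnorm μ Y n) ^ n = ∫ ω, |Y ω| ^ n ∂μ := by
    intro n hn
    have hI : (∫ ω, |Y ω| ^ ((n:ℝ)) ∂μ) = ∫ ω, |Y ω| ^ n ∂μ :=
      integral_congr_ae (Filter.Eventually.of_forall fun ω => Real.rpow_natCast _ n)
    have hnn : (0:ℝ) ≤ ∫ ω, |Y ω| ^ n ∂μ := integral_nonneg fun ω => by positivity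
    rw [mnorm, hI]
    rw [← Real.rpow_natCast ((∫ ω, |Y ω| ^ n ∂μ) ^ (1/(n:ℝ))) n, ← Real.rpow_mul hnn]
    rw [one_div_mul_cancel (by exact_mod_cast hn.ne' : ((n:ℝ)) ≠ 0), Real.rpow_one]
  set σ : ℝ := mnorm μ Y q with hσ
  have hσ0 : 0 ≤ σ := hmnorm_nonneg q
  have hσq : σ ^ q = M q := (hmnorm_pow q hqpos).trans (hMabs q hqeven).symm
  have hexpq : Real.exp (q:ℝ) = Real.exp 1 ^ q := by rw [← Real.exp_nat_mul, mul_one]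
  have hσlt : σ < Real.exp 1 := by
    have h' : σ ^ q < Real.exp 1 ^ q := by
      rw [hσq, ← hexpq]
      have := Real.exp_pos A
      linarith
    exact lt_of_pow_lt_pow_left₀ q he1.le h'
  have he3 : Real.exp 1 < 3 := by
    have := Real.exp_one_lt_d9
    linarith
  have he2 : (2:ℝ) ≤ Real.exp 1 := by
    have := Real.add_one_le_exp (1:ℝ)
    linarith
  have hq2 : 2 ≤ q := by rcases hqeven with ⟨r, rfl⟩; omega
  have hMk : ∀ k : ℕ, q ≤ k → Even k → M k ≤ (α * ((k:ℝ) / (q:ℝ)) * σ) ^ k := by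
    intro k hk hke
    have h2q : (2:ℝ) ≤ (q:ℝ) := by exact_mod_cast hq2
    have hr := hreg k q h2q (by exact_mod_cast hk)
    have hkpos : 0 < k := by omega
    calc M k = (mnorm μ Y k) ^ k := by rw [hmnorm_pow k hkpos, hMabs k hke]
      _ ≤ (α * ((k:ℝ)/(q:ℝ)) * σ) ^ k := pow_le_pow_left₀ (hmnorm_nonneg k) hr k
  -- the constant
  set c : ℝ := (q:ℝ) / (4 * Real.exp 1 * α * p) with hc
  have hqR : (0:ℝ) < q := by exact_mod_cast hqpos
  have hpR : (0:ℝ) < p := by exact_mod_cast hppos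
  have hc0 : 0 < c := by rw [hc]; positivity
  -- head coefficient bound
  have hck : ∀ k : ℕ, 1 ≤ k → k ≤ q → (p.choose k : ℝ) * c ^ k ≤ (q.choose k : ℝ) := by
    intro k hk1 hkq
    have hkR : (0:ℝ) < k := by exact_mod_cast hk1
    have hcle : c ≤ (q:ℝ) / (8 * p) := by
      rw [hc]
      apply div_le_div_of_nonneg_left hqR.le (by positivity)
      nlinarith [mul_le_mul_of_nonneg_right he2 hpR.le,
        mul_le_mul_of_nonneg_left hα (mul_pos he1 hpR).le]
    have step1 : (p.choose k : ℝ) * c ^ k ≤ ((p:ℝ)^k / k.factorial) * ((q:ℝ)/(8*p))^k :=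
      mul_le_mul (Nat.choose_le_pow_div k p) (pow_le_pow_left₀ hc0.le hcle k)
        (by positivity) (by positivity)
    have hfacR : (0:ℝ) < k.factorial := by exact_mod_cast k.factorial_pos
    have step2 : ((p:ℝ)^k / k.factorial) * ((q:ℝ)/(8*p))^k
        = (q:ℝ)^k / (8^k * k.factorial) := by
      rw [div_pow, mul_pow]
      field_simp
    have hkfac : (k:ℝ)^k ≤ 8^k * k.factorial := by
      calc (k:ℝ)^k ≤ Real.exp 1 ^ k * k.factorial := aux_pow_le_exp_factorial k
        _ ≤ 8^k * k.factorial :=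
          mul_le_mul_of_nonneg_right (pow_le_pow_left₀ he1.le (by linarith) k) hfacR.le
    have step3 : (q:ℝ)^k / (8^k * k.factorial) ≤ (q:ℝ)^k / (k:ℝ)^k :=
      div_le_div_of_nonneg_left (by positivity) (by positivity) hkfac
    have step4 : (q:ℝ)^k / (k:ℝ)^k ≤ (q.choose k : ℝ) := by
      rw [div_le_iff₀ (by positivity)]
      have hnat := aux_pow_factorial_le q k hkq
      rw [Nat.descFactorial_eq_factorial_mul_choose] at hnat
      have hnatR : ((q:ℝ))^k * (k.factorial : ℝ) ≤ ((k.factorial : ℝ) * (q.choose k : ℝ)) * (k:ℝ)^k := by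
        exact_mod_cast hnat
      nlinarith
    calc (p.choose k : ℝ) * c ^ k ≤ ((p:ℝ)^k / k.factorial) * ((q:ℝ)/(8*p))^k := step1
      _ = (q:ℝ)^k / (8^k * k.factorial) := step2
      _ ≤ (q:ℝ)^k / (k:ℝ)^k := step3
      _ ≤ (q.choose k : ℝ) := step4
  -- tail term bound
  have htail : ∀ k : ℕ, q < k → (p.choose k : ℝ) * c ^ k * M k ≤ (σ/4) ^ k := by
    intro k hk
    rcases Nat.even_or_odd k with hke | hko
    swap
    · rw [hodd k hko, mul_zero]
      positivity
    have hkR : (0:ℝ) < k := by exact_mod_cast (by omega : 0 < k)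
    have hMkb := hMk k hk.le hke
    have step0 : (p.choose k : ℝ) * c ^ k * M k
        ≤ (p.choose k : ℝ) * c ^ k * (α * ((k:ℝ)/(q:ℝ)) * σ) ^ k :=
      mul_le_mul_of_nonneg_left hMkb (by positivity)
    have key : c * (α * ((k:ℝ)/(q:ℝ)) * σ) = (k:ℝ) * σ / (4 * Real.exp 1 * p) := by
      rw [hc]
      field_simp
    have hfacR : (0:ℝ) < k.factorial := by exact_mod_cast k.factorial_pos
    have step1 : (p.choose k : ℝ) * c ^ k * (α * ((k:ℝ)/(q:ℝ)) * σ) ^ k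
        = (p.choose k : ℝ) * ((k:ℝ) * σ / (4 * Real.exp 1 * p)) ^ k := by
      rw [mul_assoc, ← mul_pow, key]
    have step2 : (p.choose k : ℝ) * ((k:ℝ) * σ / (4 * Real.exp 1 * p)) ^ k
        ≤ ((p:ℝ)^k / k.factorial) * ((k:ℝ) * σ / (4 * Real.exp 1 * p)) ^ k :=
      mul_le_mul_of_nonneg_right (Nat.choose_le_pow_div k p) (by positivity)
    have step3 : ((p:ℝ)^k / k.factorial) * ((k:ℝ) * σ / (4 * Real.exp 1 * p)) ^ k
        = ((k:ℝ)^k / (Real.exp 1 ^ k * k.factorial)) * (σ/4)^k := by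
      rw [div_pow, div_pow, mul_pow, mul_pow, mul_pow]
      field_simp
    have step4 : ((k:ℝ)^k / (Real.exp 1 ^ k * k.factorial)) * (σ/4)^k ≤ 1 * (σ/4)^k := by
      apply mul_le_mul_of_nonneg_right _ (by positivity)
      rw [div_le_one (by positivity)]
      exact aux_pow_le_exp_factorial k
    calc (p.choose k : ℝ) * c ^ k * M k
        ≤ (p.choose k : ℝ) * c ^ k * (α * ((k:ℝ)/(q:ℝ)) * σ) ^ k := step0
      _ = (p.choose k : ℝ) * ((k:ℝ) * σ / (4 * Real.exp 1 * p)) ^ k := step1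
      _ ≤ ((p:ℝ)^k / k.factorial) * ((k:ℝ) * σ / (4 * Real.exp 1 * p)) ^ k := step2
      _ = ((k:ℝ)^k / (Real.exp 1 ^ k * k.factorial)) * (σ/4)^k := step3
      _ ≤ 1 * (σ/4)^k := step4
      _ = (σ/4)^k := one_mul _
  -- geometric bound on the tail
  have hgeom : ∑ k ∈ Ico (q+1) (p+1), (σ/4) ^ k ≤ Real.exp A - 1 := by
    set r : ℝ := σ/4 with hr
    have hr0 : 0 ≤ r := by positivity
    have hr1 : r < 3/4 := by rw [hr]; linarith
    have hsum : ∑ k ∈ Ico (q+1) (p+1), r ^ k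
        = r^(q+1) * ∑ i ∈ range (p - q), r ^ i := by
      rw [Finset.sum_Ico_eq_sum_range]
      have : p + 1 - (q + 1) = p - q := by omega
      rw [this, Finset.mul_sum]
      exact Finset.sum_congr rfl fun i _ => by rw [← pow_add]
    have hgs : ∑ i ∈ range (p - q), r ^ i ≤ 1 / (1 - r) := by
      have h01 : (0:ℝ) < 1 - r := by linarith
      have he : ∑ i ∈ range (p - q), r ^ i = (1 - r ^ (p - q)) / (1 - r) := by
        rw [geom_sum_eq (by linarith : r ≠ 1), ← neg_div_neg_eq, neg_sub, neg_sub]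
      rw [he]
      apply div_le_div_of_nonneg_right ?_ h01.le
      have : (0:ℝ) ≤ r ^ (p - q) := by positivity
      linarith
    have h4 : 1 / (1 - r) ≤ 4 := by
      rw [div_le_iff₀ (by linarith)]
      linarith
    have hbound : ∑ k ∈ Ico (q+1) (p+1), r ^ k ≤ 4 * r * r ^ q := by
      rw [hsum, pow_succ]
      calc r ^ q * r * ∑ i ∈ range (p - q), r ^ i
          ≤ r ^ q * r * 4 := by
            apply mul_le_mul_of_nonneg_left (hgs.trans h4) (by positivity)
        _ = 4 * r * r ^ q := by ring
    have hrq : r ^ q = σ ^ q / 4 ^ q := by rw [hr, div_pow]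
    have h4q : (16:ℝ) ≤ 4 ^ q := by
      calc (16:ℝ) = 4 ^ 2 := by norm_num
        _ ≤ 4 ^ q := pow_le_pow_right₀ (by norm_num) hq2
    have hσqb : σ ^ q ≤ Real.exp A - 1 := hσq ▸ hMq
    have hσq0 : 0 ≤ σ ^ q := by positivity
    have : 4 * r * r ^ q ≤ 3 * (σ ^ q / 4 ^ q) := by
      rw [hrq]
      have h1' : 0 ≤ σ ^ q / 4 ^ q := by positivity
      nlinarith
    have hfin : 3 * (σ ^ q / 4 ^ q) ≤ σ ^ q := by
      have hd : σ ^ q / 4 ^ q ≤ σ ^ q / 16 :=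
        div_le_div_of_nonneg_left hσq0 (by norm_num) h4q
      linarith
    calc ∑ k ∈ Ico (q+1) (p+1), r ^ k ≤ 4 * r * r ^ q := hbound
      _ ≤ 3 * (σ ^ q / 4 ^ q) := this
      _ ≤ σ ^ q := hfin
      _ ≤ Real.exp A - 1 := hσqb
  -- assembling
  have habs : ∫ ω, |1 + c * Y ω| ^ p ∂μ = ∫ ω, (1 + c * Y ω) ^ p ∂μ :=
    integral_congr_ae (Filter.Eventually.of_forall fun ω => hpeven.pow_abs _)
  have hq1p : q + 1 ≤ p + 1 := by omega
  have hsplit2 : ∑ k ∈ Ico 1 (p+1), (p.choose k : ℝ) * c ^ k * M k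
      = ∑ k ∈ Ico 1 (q+1), (p.choose k : ℝ) * c ^ k * M k
        + ∑ k ∈ Ico (q+1) (p+1), (p.choose k : ℝ) * c ^ k * M k :=
    (Finset.sum_Ico_consecutive _ (by omega) hq1p).symm
  have hhead : ∑ k ∈ Ico 1 (q+1), (p.choose k : ℝ) * c ^ k * M k ≤ Real.exp A - 1 := by
    calc ∑ k ∈ Ico 1 (q+1), (p.choose k : ℝ) * c ^ k * M k
        ≤ ∑ k ∈ Ico 1 (q+1), (q.choose k : ℝ) * M k := by
          apply Finset.sum_le_sum
          intro k hk
          rw [Finset.mem_Ico] at hk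
          exact mul_le_mul_of_nonneg_right (hck k hk.1 (by omega)) (hMnonneg k)
      _ ≤ Real.exp A - 1 := hqIco
  have htailsum : ∑ k ∈ Ico (q+1) (p+1), (p.choose k : ℝ) * c ^ k * M k
      ≤ Real.exp A - 1 := by
    calc ∑ k ∈ Ico (q+1) (p+1), (p.choose k : ℝ) * c ^ k * M k
        ≤ ∑ k ∈ Ico (q+1) (p+1), (σ/4) ^ k := by
          apply Finset.sum_le_sum
          intro k hk
          rw [Finset.mem_Ico] at hk
          exact htail k (by omega)
      _ ≤ Real.exp A - 1 := hgeom
  have hmain : ∫ ω, |1 + c * Y ω| ^ p ∂μ ≤ 2 * Real.exp A - 1 := by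
    rw [habs, hexpand c p, hsplit (fun k => (p.choose k : ℝ) * c ^ k * M k) p]
    simp only [Nat.choose_zero_right, Nat.cast_one, one_mul, pow_zero, hM0, mul_one]
    rw [hsplit2]
    linarith
  have hexp2A : 2 * Real.exp A - 1 ≤ Real.exp (2 * A) := by
    have he : Real.exp (2 * A) = Real.exp A * Real.exp A := by
      rw [two_mul, Real.exp_add]
    nlinarith [sq_nonneg (Real.exp A - 1)]
  have hfinal : Real.exp (2 * A) ≤ Real.exp ((p:ℝ) * A / q) := by
    apply Real.exp_le_exp.mpr
    rw [le_div_iff₀ hqR]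
    have : (2 * q : ℝ) ≤ p := by exact_mod_cast hpq
    nlinarith
  calc ∫ ω, |1 + c * Y ω| ^ p ∂μ ≤ 2 * Real.exp A - 1 := hmain
    _ ≤ Real.exp (2 * A) := hexp2A
    _ ≤ Real.exp ((p:ℝ) * A / q) := hfinal
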